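/- Let p be a stochastic tournament on a finite set V with |V| = n ≥ 3 and let ε > 0. Suppose p is ε-far from reversible in the L1 sense: for every reversible stochastic tournament p' on V, the sum over all unordered pairs {x, y} of distinct vertices of |p x y − p' x y| is at least ε * C(n, 2). Then the number of unbalanced unordered triangles of p, i.e., the number of 3-element subsets {x, y, z} of V with p x y * p y z * p z x ≠ p x z * p z y * p y x, is at least ε * C(n, 3). -/

import Mathlib

open Finset
open scoped Classical



private lemma key_approx {V : Type*} [Fintype V] [DecidableEq V] (p : V → V → ℝ)
    (hp : ∀ x y : V, x ≠ y → 0 < p x y ∧ p x y < 1 ∧ p x y + p y x = 1)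
    (z : V) :
    ∃ p' : V → V → ℝ,
      (∀ x y : V, x ≠ y → 0 < p' x y ∧ p' x y < 1 ∧ p' x y + p' y x = 1) ∧
      (∃ π : V → ℝ, (∀ x, 0 < π x) ∧ (∑ x, π x) = 1 ∧
        ∀ x y : V, x ≠ y → π x * p' x y = π y * p' y x) ∧
      ∀ x y : V, x ≠ y →
        |p x y - p' x y| ≤ if x ≠ y ∧ x ≠ z ∧ y ≠ z ∧
            p x y * p y z * p z x ≠ p x z * p z y * p y x then 1 else 0 := by
  have : Nonempty V := ⟨z⟩
  set r : V → ℝ := fun x => if x = z then 1 else p x z / p z x with hrdef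
  have hr : ∀ x, 0 < r x := by
    intro x
    by_cases hx : x = z
    · simp [hrdef, hx]
    · simp only [hrdef, if_neg hx]
      exact div_pos (hp x z hx).1 (hp z x (Ne.symm hx)).1
  refine ⟨fun x y => r x / (r x + r y), ?_, ?_, ?_⟩
  · intro x y _
    have hx := hr x; have hy := hr y
    refine ⟨div_pos hx (by linarith), ?_, ?_⟩
    · rw [div_lt_one (by linarith)]; linarith
    · field_simp
      ring
  · set S : ℝ := ∑ x, (r x)⁻¹ with hSdef
    have hS : 0 < S := Finset.sum_pos (fun x _ => inv_pos.2 (hr x)) univ_nonempty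
    refine ⟨fun x => (r x)⁻¹ / S, fun x => div_pos (inv_pos.2 (hr x)) hS, ?_, ?_⟩
    · rw [← Finset.sum_div, ← hSdef, div_self hS.ne']
    · intro x y _
      have hx := (hr x).ne'; have hy := (hr y).ne'
      have hxy : r x + r y ≠ 0 := by have := hr x; have := hr y; positivity
      have hyx : r y + r x ≠ 0 := by have := hr x; have := hr y; positivity
      field_simp
      ring
  · intro x y hxy
    have hite : (0:ℝ) ≤ if x ≠ y ∧ x ≠ z ∧ y ≠ z ∧
        p x y * p y z * p z x ≠ p x z * p z y * p y x then 1 else 0 := by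
      split_ifs <;> norm_num
    by_cases hxz : x = z
    · -- p' z y = p z y
      subst hxz
      have hyx : y ≠ x := Ne.symm hxy
      have h1 : r x = 1 := by simp [hrdef]
      have h2 : r y = p y x / p x y := by simp [hrdef, hyx]
      have hpxy := hp x y hxy
      have heq : r x / (r x + r y) = p x y := by
        rw [h1, h2]
        have h3 : p x y ≠ 0 := hpxy.1.ne'
        have h4 : p y x = 1 - p x y := by linarith [hpxy.2.2]
        rw [h4]
        field_simp
        ring
      show |p x y - r x / (r x + r y)| ≤ _
      rw [heq, sub_self, abs_zero]
      exact hite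
    · by_cases hyz : y = z
      · subst hyz
        have h1 : r y = 1 := by simp [hrdef]
        have h2 : r x = p x y / p y x := by simp [hrdef, hxz]
        have hpxy := hp x y hxy
        have heq : r x / (r x + r y) = p x y := by
          rw [h1, h2]
          have h3 : p y x ≠ 0 := (hp y x (Ne.symm hxy)).1.ne'
          have h4 : p y x = 1 - p x y := by linarith [hpxy.2.2]
          rw [h4]
          have h5 : (1:ℝ) - p x y ≠ 0 := by rw [← h4]; exact h3
          field_simp
          ring
        show |p x y - r x / (r x + r y)| ≤ _
        rw [heq, sub_self, abs_zero]
        exact hite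
      · by_cases hbal : p x y * p y z * p z x = p x z * p z y * p y x
        · -- balanced: p' x y = p x y
          have h1 : r x = p x z / p z x := by simp [hrdef, hxz]
          have h2 : r y = p y z / p z y := by simp [hrdef, hyz]
          have hxz0 := (hp x z hxz).1
          have hzx0 := (hp z x (Ne.symm hxz)).1
          have hyz0 := (hp y z hyz).1
          have hzy0 := (hp z y (Ne.symm hyz)).1
          have hsum := (hp x y hxy).2.2
          have heq : r x / (r x + r y) = p x y := by
            rw [h1, h2]
            rw [div_eq_iff (by positivity)]
            field_simp
            linear_combination (-1) * hbal - (p x z * p z y) * hsum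
          show |p x y - r x / (r x + r y)| ≤ _
          rw [heq, sub_self, abs_zero]
          exact hite
        · have hc : x ≠ y ∧ x ≠ z ∧ y ≠ z ∧
              p x y * p y z * p z x ≠ p x z * p z y * p y x := ⟨hxy, hxz, hyz, hbal⟩
          rw [if_pos hc]
          have hpxy := hp x y hxy
          have hx := hr x; have hy := hr y
          have hp'0 : 0 < r x / (r x + r y) := div_pos hx (by linarith)
          have hp'1 : r x / (r x + r y) < 1 := by rw [div_lt_one (by linarith)]; linarith
          rw [abs_sub_le_iff]
          constructor <;> linarith [hpxy.1, hpxy.2.1]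



set_option maxHeartbeats 1000000 in
private lemma mem_perms6 {V : Type*} [DecidableEq V] {a b c x y z : V}
    (hxy : x ≠ y) (hxz : x ≠ z) (hyz : y ≠ z)
    (h : ({x, y, z} : Finset V) = {a, b, c}) :
    (x, y, z) ∈ ({(a,b,c),(a,c,b),(b,a,c),(b,c,a),(c,a,b),(c,b,a)} : Finset (V×V×V)) := by
  have hx : x ∈ ({a,b,c} : Finset V) := by rw [← h]; simp
  have hy : y ∈ ({a,b,c} : Finset V) := by rw [← h]; simp
  have hz : z ∈ ({a,b,c} : Finset V) := by rw [← h]; simp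
  have ha : a ∈ ({x,y,z} : Finset V) := by rw [h]; simp
  have hb : b ∈ ({x,y,z} : Finset V) := by rw [h]; simp
  have hc : c ∈ ({x,y,z} : Finset V) := by rw [h]; simp
  simp only [mem_insert, mem_singleton] at hx hy hz ha hb hc
  simp only [mem_insert, mem_singleton, Prod.mk.injEq]
  rcases hx with rfl|rfl|rfl <;> rcases hy with rfl|rfl|rfl <;>
    rcases hz with rfl|rfl|rfl <;> tauto

private lemma card_six {α : Type*} [DecidableEq α] (t1 t2 t3 t4 t5 t6 : α) :
    ({t1,t2,t3,t4,t5,t6} : Finset α).card ≤ 6 := by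
  refine (Finset.card_insert_le _ _).trans (Nat.succ_le_succ ?_)
  refine (Finset.card_insert_le _ _).trans (Nat.succ_le_succ ?_)
  refine (Finset.card_insert_le _ _).trans (Nat.succ_le_succ ?_)
  refine (Finset.card_insert_le _ _).trans (Nat.succ_le_succ ?_)
  refine (Finset.card_insert_le _ _).trans (Nat.succ_le_succ ?_)
  simp


/-- If a stochastic tournament `p` is `ε`-far (in the `L¹` sense, summing over
unordered pairs, i.e. half the ordered pair sum) from every reversible
stochastic tournament, then `p` has at least `ε * C(n, 3)` unbalanced
unordered triangles. -/
theorem far_from_reversible_many_unbalanced {V : Type*} [Fintype V] [DecidableEq V]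
    (p : V → V → ℝ)
    (hp : ∀ x y : V, x ≠ y → 0 < p x y ∧ p x y < 1 ∧ p x y + p y x = 1)
    (n : ℕ) (hn : Fintype.card V = n) (hn3 : 3 ≤ n)
    (ε : ℝ) (hε : 0 < ε)
    (hfar : ∀ p' : V → V → ℝ,
      (∀ x y : V, x ≠ y → 0 < p' x y ∧ p' x y < 1 ∧ p' x y + p' y x = 1) →
      (∃ π : V → ℝ, (∀ x, 0 < π x) ∧ (∑ x, π x) = 1 ∧
        ∀ x y : V, x ≠ y → π x * p' x y = π y * p' y x) →
      ε * (n.choose 2 : ℝ) ≤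
        (1 / 2) * ∑ x : V, ∑ y ∈ Finset.univ.erase x, |p x y - p' x y|) :
    ε * (n.choose 3 : ℝ) ≤
      ({T : Finset V | ∃ x y z : V, x ≠ y ∧ x ≠ z ∧ y ≠ z ∧ T = {x, y, z} ∧
        p x y * p y z * p z x ≠ p x z * p z y * p y x}.ncard : ℝ) := by
  classical
  set Bad : Finset (Finset V) := univ.filter (fun T => ∃ x y z : V, x ≠ y ∧ x ≠ z ∧ y ≠ z ∧
      T = {x, y, z} ∧ p x y * p y z * p z x ≠ p x z * p z y * p y x) with hBad
  have hset : {T : Finset V | ∃ x y z : V, x ≠ y ∧ x ≠ z ∧ y ≠ z ∧ T = {x, y, z} ∧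
      p x y * p y z * p z x ≠ p x z * p z y * p y x} = (↑Bad : Set (Finset V)) := by
    ext T; simp [hBad]
  rw [hset, Set.ncard_coe_finset]
  set ind : V → V → V → ℝ := fun x y z => if x ≠ y ∧ x ≠ z ∧ y ≠ z ∧
      p x y * p y z * p z x ≠ p x z * p z y * p y x then 1 else 0 with hind
  -- Step 1: per-vertex bound
  have step1 : ∀ z : V, ε * (n.choose 2 : ℝ) ≤
      (1/2) * ∑ x : V, ∑ y ∈ Finset.univ.erase x, ind x y z := by
    intro z
    obtain ⟨p', h1, h2, h3⟩ := key_approx p hp z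
    refine (hfar p' h1 h2).trans ?_
    apply mul_le_mul_of_nonneg_left _ (by norm_num : (0:ℝ) ≤ 1/2)
    refine Finset.sum_le_sum fun x _ => Finset.sum_le_sum fun y hy => ?_
    have hxy : x ≠ y := (Finset.mem_erase.1 hy).1.symm
    exact h3 x y hxy
  -- Step 2: sum over z
  have step2 : (n : ℝ) * (ε * (n.choose 2 : ℝ)) ≤
      (1/2) * ∑ z : V, ∑ x : V, ∑ y ∈ Finset.univ.erase x, ind x y z := by
    calc (n : ℝ) * (ε * (n.choose 2 : ℝ))
        = ∑ _z : V, ε * (n.choose 2 : ℝ) := by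
          rw [Finset.sum_const, Finset.card_univ, hn, nsmul_eq_mul]
      _ ≤ ∑ z : V, (1/2) * ∑ x : V, ∑ y ∈ Finset.univ.erase x, ind x y z :=
          Finset.sum_le_sum fun z _ => step1 z
      _ = (1/2) * ∑ z : V, ∑ x : V, ∑ y ∈ Finset.univ.erase x, ind x y z := by
          rw [Finset.mul_sum]
  -- Step 3: replace erased sums by full sums
  have step3 : ∑ z : V, ∑ x : V, ∑ y ∈ Finset.univ.erase x, ind x y z
      = ∑ z : V, ∑ x : V, ∑ y : V, ind x y z := by
    refine Finset.sum_congr rfl fun z _ => Finset.sum_congr rfl fun x _ => ?_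
    exact Finset.sum_erase _ (by simp [hind])
  -- Step 4: identify with the cardinality of the finset of bad ordered triples
  set Bado : Finset (V × V × V) := (univ ×ˢ univ ×ˢ univ).filter
      (fun t => t.2.1 ≠ t.2.2 ∧ t.2.1 ≠ t.1 ∧ t.2.2 ≠ t.1 ∧
        p t.2.1 t.2.2 * p t.2.2 t.1 * p t.1 t.2.1 ≠
          p t.2.1 t.1 * p t.1 t.2.2 * p t.2.2 t.2.1) with hBado
  have step4 : ∑ z : V, ∑ x : V, ∑ y : V, ind x y z = (Bado.card : ℝ) := by
    rw [hBado, Finset.card_filter]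
    push_cast
    rw [Finset.sum_product]
    simp only [Finset.sum_product]
    rfl
  -- Step 5: each unbalanced triangle is counted at most 6 times
  have step5 : Bado.card ≤ 6 * Bad.card := by
    have hmap : ∀ t ∈ Bado, ({t.2.1, t.2.2, t.1} : Finset V) ∈ Bad := by
      intro t ht
      rw [hBado, Finset.mem_filter] at ht
      obtain ⟨-, hxy, hxz, hyz, hunb⟩ := ht
      rw [hBad, Finset.mem_filter]
      exact ⟨Finset.mem_univ _, t.2.1, t.2.2, t.1, hxy, hxz, hyz, rfl, hunb⟩
    rw [Finset.card_eq_sum_card_fiberwise hmap]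
    have hfib : ∀ T ∈ Bad,
        (Bado.filter fun t => ({t.2.1, t.2.2, t.1} : Finset V) = T).card ≤ 6 := by
      intro T hT
      rw [hBad, Finset.mem_filter] at hT
      obtain ⟨-, a, b, c, hab, hac, hbc, hTabc, -⟩ := hT
      refine le_trans (Finset.card_le_card ?_) (card_six (a,b,c) (a,c,b) (b,a,c) (b,c,a) (c,a,b) (c,b,a))
      intro t ht
      rw [Finset.mem_filter] at ht
      obtain ⟨ht1, ht2⟩ := ht
      rw [hBado, Finset.mem_filter] at ht1
      obtain ⟨-, hxy, hxz, hyz, -⟩ := ht1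
      have hset2 : ({t.1, t.2.1, t.2.2} : Finset V) = {a, b, c} := by
        rw [← hTabc, ← ht2]
        ext w; simp; tauto
      exact mem_perms6 (Ne.symm hxz) (Ne.symm hyz) hxy hset2
    calc ∑ T ∈ Bad, (Bado.filter fun t => ({t.2.1, t.2.2, t.1} : Finset V) = T).card
        ≤ ∑ _T ∈ Bad, 6 := Finset.sum_le_sum hfib
      _ = 6 * Bad.card := by rw [Finset.sum_const, smul_eq_mul, mul_comm]
  -- Final arithmetic
  have hchoose : n.choose 3 * 3 ≤ n.choose 2 * n := by
    have h1 : n.choose 3 * 3 = n.choose 2 * (n - 2) := Nat.choose_succ_right_eq n 2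
    rw [h1]
    exact Nat.mul_le_mul_left _ (Nat.sub_le n 2)
  have hchooseR : (n.choose 3 : ℝ) * 3 ≤ (n.choose 2 : ℝ) * n := by exact_mod_cast hchoose
  have hmain : (n : ℝ) * (ε * (n.choose 2 : ℝ)) ≤ 3 * (Bad.card : ℝ) := by
    have := step2
    rw [step3, step4] at this
    have h6 : (Bado.card : ℝ) ≤ 6 * (Bad.card : ℝ) := by exact_mod_cast step5
    linarith
  have hlast : ε * ((n.choose 3 : ℝ) * 3) ≤ ε * ((n.choose 2 : ℝ) * n) :=
    mul_le_mul_of_nonneg_left hchooseR hε.le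
  nlinarith [hlast, hmain]
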